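/- arXiv:1709.05846 — 3 statements merged into one kernel-verified Lean document; each statement's English description precedes it below -/
import Mathlib

section
/- Let p, q ≥ 1 and k ∈ ℕ, and let Cl^ℂ_{p+q} be the Clifford algebra of the quadratic form Q(z) = -(z_1² + ⋯ + z_{p+q}²) on the complex module Fin (p+q) → ℂ, with embedding ι. Let τ ∈ ℝ^p and σ ∈ ℝ^q be vectors with ‖τ‖ = ‖σ‖, regarded as complex vectors τ̃, σ̃ ∈ Fin (p+q) → ℂ supported in the first p and last q coordinates respectively. Then the function h : ℝ^{p+q} → Cl^ℂ_{p+q} defined by h(x,y) = (⟨x,τ⟩ + i⟨y,σ⟩)^k • (ι(τ̃) + i • ι(σ̃)) is monogenic: Σ_{j=1}^{p+q} ι(e_j) * (∂_{x_j} h)(a) = 0 for every a, where (e_j) is the standard basis (as complex vectors) and ∂_{x_j} are real partial derivatives. -/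
open MeasureTheory Metric
open scoped RealInnerProductSpace

noncomputable section

/-- Weak (Pettis-style) directional derivative: `f` has derivative `d` at `a` in direction `v`
iff every real-linear functional of `f` along the line `a + t • v` has derivative `ℓ d` at `t = 0`.
For finite-dimensional codomains this coincides with the usual directional derivative. -/
def HasPDeriv {E A : Type*} [NormedAddCommGroup E] [NormedSpace ℝ E]
    [AddCommGroup A] [Module ℝ A] (f : E → A) (a v : E) (d : A) : Prop :=
  ∀ ℓ : A →ₗ[ℝ] ℝ, HasDerivAt (fun t : ℝ => ℓ (f (a + t • v))) (ℓ d) 0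

/-- The Dirac derivative of the complex-Clifford-algebra valued function `f` at `a` equals `D`:
the (real) partial derivatives of `f` at `a` in the standard coordinate directions exist and
`∑ⱼ ι(eⱼ) * ∂ⱼf(a) = D`. -/
def DiracDerivEqC {m : ℕ} {Q : QuadraticForm ℂ (Fin m → ℂ)}
    (f : EuclideanSpace ℝ (Fin m) → CliffordAlgebra Q)
    (a : EuclideanSpace ℝ (Fin m)) (D : CliffordAlgebra Q) : Prop :=
  ∃ d : Fin m → CliffordAlgebra Q,
    (∀ j, HasPDeriv f a (EuclideanSpace.single j 1) (d j)) ∧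
    ∑ j, CliffordAlgebra.ι Q (Pi.single j (1 : ℂ)) * d j = D

variable (p q : ℕ) in
/-- The first `p` coordinates of a point of `ℝ^{p+q}`. -/
def xpart (z : EuclideanSpace ℝ (Fin (p + q))) : EuclideanSpace ℝ (Fin p) :=
  (WithLp.equiv 2 (Fin p → ℝ)).symm fun i => z (Fin.castAdd q i)

variable (p q : ℕ) in
/-- The last `q` coordinates of a point of `ℝ^{p+q}`. -/
def ypart (z : EuclideanSpace ℝ (Fin (p + q))) : EuclideanSpace ℝ (Fin q) :=
  (WithLp.equiv 2 (Fin q → ℝ)).symm fun i => z (Fin.natAdd p i)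

variable (p q : ℕ) in
/-- A real vector of `ℝ^p` regarded as a complex vector of `ℂ^{p+q}` supported in the
first `p` coordinates. -/
def embXC (x : EuclideanSpace ℝ (Fin p)) : Fin (p + q) → ℂ :=
  Fin.addCases (fun i => (x i : ℂ)) fun _ => 0

variable (p q : ℕ) in
/-- A real vector of `ℝ^q` regarded as a complex vector of `ℂ^{p+q}` supported in the
last `q` coordinates. -/
def embYC (y : EuclideanSpace ℝ (Fin q)) : Fin (p + q) → ℂ :=
  Fin.addCases (fun _ => 0) fun i => (y i : ℂ)

-- auxiliary lemmas
lemma castAdd_ne_natAdd {p q : ℕ} (i : Fin p) (j : Fin q) :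
    Fin.castAdd q i ≠ Fin.natAdd p j := by
  intro h
  have := congrArg Fin.val h
  simp only [Fin.coe_castAdd, Fin.coe_natAdd] at this
  omega

lemma sum_ite_castAdd {p q : ℕ} (τ : Fin p → ℝ) (i0 : Fin p) :
    ∑ i : Fin p, (if Fin.castAdd q i = Fin.castAdd q i0 then τ i else 0) = τ i0 := by
  have h : ∀ i : Fin p, (if Fin.castAdd q i = Fin.castAdd q i0 then τ i else 0)
      = if i = i0 then τ i else 0 := by
    intro i
    congr 1
    simp [Fin.ext_iff]
  rw [Finset.sum_congr rfl fun i _ => h i, Finset.sum_ite_eq']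
  simp

lemma sum_ite_natAdd {p q : ℕ} (σ : Fin q → ℝ) (i0 : Fin q) :
    ∑ i : Fin q, (if Fin.natAdd p i = Fin.natAdd p i0 then σ i else 0) = σ i0 := by
  have h : ∀ i : Fin q, (if Fin.natAdd p i = Fin.natAdd p i0 then σ i else 0)
      = if i = i0 then σ i else 0 := by
    intro i
    congr 1
    simp [Fin.ext_iff]
  rw [Finset.sum_congr rfl fun i _ => h i, Finset.sum_ite_eq']
  simp

theorem stmt13 (p q : ℕ) (hp : 1 ≤ p) (hq : 1 ≤ q) (k : ℕ)
    (Q : QuadraticForm ℂ (Fin (p + q) → ℂ))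
    (hQ : ∀ z, Q z = -∑ i, z i ^ 2)
    (τ : EuclideanSpace ℝ (Fin p)) (σ : EuclideanSpace ℝ (Fin q)) (hτσ : ‖τ‖ = ‖σ‖) :
    ∀ a, DiracDerivEqC (fun z =>
      (((⟪xpart p q z, τ⟫ : ℝ) : ℂ) + Complex.I * ((⟪ypart p q z, σ⟫ : ℝ) : ℂ)) ^ k •
        (CliffordAlgebra.ι Q (embXC p q τ) +
          Complex.I • CliffordAlgebra.ι Q (embYC p q σ))) a 0 := by
  intro a
  classical
  set V : CliffordAlgebra Q := CliffordAlgebra.ι Q (embXC p q τ) +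
      Complex.I • CliffordAlgebra.ι Q (embYC p q σ) with hV
  set w : ℂ := ((⟪xpart p q a, τ⟫ : ℝ) : ℂ) + Complex.I * ((⟪ypart p q a, σ⟫ : ℝ) : ℂ) with hw
  set r : Fin (p + q) → ℂ := fun j => embXC p q τ j + Complex.I * embYC p q σ j with hr
  -- inner products as sums
  have hxin : ∀ z : EuclideanSpace ℝ (Fin (p + q)),
      (⟪xpart p q z, τ⟫ : ℝ) = ∑ i, z (Fin.castAdd q i) * τ i := by
    intro z; simp [xpart, PiLp.inner_apply, RCLike.inner_apply]
    exact Finset.sum_congr rfl fun i _ => mul_comm _ _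
  have hyin : ∀ z : EuclideanSpace ℝ (Fin (p + q)),
      (⟪ypart p q z, σ⟫ : ℝ) = ∑ i, z (Fin.natAdd p i) * σ i := by
    intro z; simp [ypart, PiLp.inner_apply, RCLike.inner_apply]
    exact Finset.sum_congr rfl fun i _ => mul_comm _ _
  -- translation key lemma
  have key : ∀ (j : Fin (p + q)) (t : ℝ),
      ((⟪xpart p q (a + t • EuclideanSpace.single j (1:ℝ)), τ⟫ : ℝ) : ℂ)
        + Complex.I * ((⟪ypart p q (a + t • EuclideanSpace.single j (1:ℝ)), σ⟫ : ℝ) : ℂ)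
      = w + (t : ℂ) * r j := by
    intro j t
    have hx : (⟪xpart p q (a + t • EuclideanSpace.single j (1:ℝ)), τ⟫ : ℝ)
        = ⟪xpart p q a, τ⟫ + t * ∑ i, (if Fin.castAdd q i = j then τ i else 0) := by
      rw [hxin, hxin]
      have h1 : ∀ i : Fin p,
          (a + t • EuclideanSpace.single j (1:ℝ)) (Fin.castAdd q i) * τ i
          = a (Fin.castAdd q i) * τ i + t * (if Fin.castAdd q i = j then τ i else 0) := by
        intro i
        simp only [PiLp.add_apply, PiLp.smul_apply, EuclideanSpace.single_apply, smul_eq_mul]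
        split <;> ring
      rw [Finset.sum_congr rfl fun i _ => h1 i, Finset.sum_add_distrib, ← Finset.mul_sum]
    have hy : (⟪ypart p q (a + t • EuclideanSpace.single j (1:ℝ)), σ⟫ : ℝ)
        = ⟪ypart p q a, σ⟫ + t * ∑ i, (if Fin.natAdd p i = j then σ i else 0) := by
      rw [hyin, hyin]
      have h1 : ∀ i : Fin q,
          (a + t • EuclideanSpace.single j (1:ℝ)) (Fin.natAdd p i) * σ i
          = a (Fin.natAdd p i) * σ i + t * (if Fin.natAdd p i = j then σ i else 0) := by
        intro i
        simp only [PiLp.add_apply, PiLp.smul_apply, EuclideanSpace.single_apply, smul_eq_mul]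
        split <;> ring
      rw [Finset.sum_congr rfl fun i _ => h1 i, Finset.sum_add_distrib, ← Finset.mul_sum]
    have hSx : ((∑ i, (if Fin.castAdd q i = j then τ i else 0) : ℝ) : ℂ) = embXC p q τ j ∧
        ((∑ i, (if Fin.natAdd p i = j then σ i else 0) : ℝ) : ℂ) = embYC p q σ j := by
      refine Fin.addCases (fun i0 => ?_) (fun i0 => ?_) j
      · constructor
        · rw [sum_ite_castAdd]; simp [embXC]
        · rw [Finset.sum_eq_zero fun i _ =>
            if_neg fun h => castAdd_ne_natAdd i0 i h.symm]
          simp [embYC]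
      · constructor
        · rw [Finset.sum_eq_zero fun i _ =>
            if_neg fun h => castAdd_ne_natAdd i i0 h]
          simp [embXC]
        · rw [sum_ite_natAdd]; simp [embYC]
    rw [hx, hy, Complex.ofReal_add, Complex.ofReal_add, Complex.ofReal_mul,
      Complex.ofReal_mul, hSx.1, hSx.2, hw, hr]
    ring
  unfold DiracDerivEqC HasPDeriv
  refine ⟨fun j => ((k : ℂ) * w ^ (k - 1) * r j) • V, ?_, ?_⟩
  · intro j ℓ
    simp only [key]
    set φ : ℂ →L[ℝ] ℝ := LinearMap.toContinuousLinearMap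
      (ℓ.comp ((LinearMap.toSpanSingleton ℂ (CliffordAlgebra Q) V).restrictScalars ℝ)) with hφ
    have hφ' : ∀ c : ℂ, φ c = ℓ (c • V) := fun c => rfl
    have hc : HasDerivAt (fun t : ℝ => w + (t : ℂ) * r j) (r j) (0 : ℝ) := by
      simpa using ((Complex.ofRealCLM.hasDerivAt (x := (0 : ℝ))).mul_const (r j)).const_add w
    have houter : HasDerivAt (fun z : ℂ => z ^ k) ((k : ℂ) * w ^ (k - 1)) (w + ((0 : ℝ) : ℂ) * r j) := by
      simpa using hasDerivAt_pow k w
    have hpow : HasDerivAt (fun t : ℝ => (w + (t : ℂ) * r j) ^ k)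
        ((k : ℂ) * w ^ (k - 1) * r j) (0 : ℝ) := by
      have h := (houter.hasFDerivAt.restrictScalars ℝ).comp_hasDerivAt (0 : ℝ) hc
      simpa [mul_comm, Function.comp_def] using h
    have h2 := φ.hasFDerivAt.comp_hasDerivAt (0 : ℝ) hpow
    simpa [Function.comp_def, hφ'] using h2
  · have hrr : (∑ j, r j • (Pi.single j (1 : ℂ) : Fin (p + q) → ℂ)) = r := by
      ext m
      simp [Pi.single_apply, Finset.sum_apply, mul_ite]
    have hVr : CliffordAlgebra.ι Q r = V := by
      have : r = embXC p q τ + Complex.I • embYC p q σ := by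
        funext j; simp [hr, Pi.smul_apply, smul_eq_mul]
      rw [this, map_add, _root_.map_smul, hV]
    have hQr : Q r = 0 := by
      rw [hQ]
      have hrc : ∀ i : Fin p, r (Fin.castAdd q i) = (τ i : ℂ) := by
        intro i; simp [hr, embXC, embYC]
      have hrn : ∀ i : Fin q, r (Fin.natAdd p i) = Complex.I * (σ i : ℂ) := by
        intro i; simp [hr, embXC, embYC]
      have hsplit : ∑ i : Fin (p + q), r i ^ 2
          = ∑ i : Fin p, (τ i : ℂ) ^ 2 + ∑ i : Fin q, (Complex.I * (σ i : ℂ)) ^ 2 := by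
        rw [Fin.sum_univ_add]
        congr 1
        · exact Finset.sum_congr rfl fun i _ => by rw [hrc i]
        · exact Finset.sum_congr rfl fun i _ => by rw [hrn i]
      have hnorm : ∑ i, τ i ^ 2 = ∑ i, σ i ^ 2 := by
        have h1 : (⟪τ, τ⟫ : ℝ) = ∑ i, τ i ^ 2 := by
          simp only [PiLp.inner_apply, RCLike.inner_apply, conj_trivial]
          exact Finset.sum_congr rfl fun i _ => by ring
        have h2 : (⟪σ, σ⟫ : ℝ) = ∑ i, σ i ^ 2 := by
          simp only [PiLp.inner_apply, RCLike.inner_apply, conj_trivial]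
          exact Finset.sum_congr rfl fun i _ => by ring
        rw [← h1, ← h2, real_inner_self_eq_norm_sq, real_inner_self_eq_norm_sq, hτσ]
      have : ∑ i : Fin q, (Complex.I * (σ i : ℂ)) ^ 2 = -∑ i : Fin q, (σ i : ℂ) ^ 2 := by
        rw [← Finset.sum_neg_distrib]
        exact Finset.sum_congr rfl fun i _ => by
          rw [mul_pow, Complex.I_sq]; ring
      rw [hsplit, this]
      have : (∑ i : Fin p, (τ i : ℂ) ^ 2) = ∑ i : Fin q, (σ i : ℂ) ^ 2 := by
        push_cast [← Complex.ofReal_sum]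
        exact_mod_cast congrArg (Complex.ofReal) hnorm
      rw [this]
      ring
    calc ∑ j, CliffordAlgebra.ι Q (Pi.single j (1 : ℂ)) * (((k : ℂ) * w ^ (k - 1) * r j) • V)
        = ((k : ℂ) * w ^ (k - 1)) • ∑ j, (r j • CliffordAlgebra.ι Q (Pi.single j (1 : ℂ))) * V := by
          rw [Finset.smul_sum]
          exact Finset.sum_congr rfl fun j _ => by
            rw [mul_smul_comm, mul_smul, smul_mul_assoc]
      _ = ((k : ℂ) * w ^ (k - 1)) • ((CliffordAlgebra.ι Q r) * V) := by
          rw [← Finset.sum_mul]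
          congr 2
          conv_rhs => rw [← hrr]
          rw [map_sum]
          exact Finset.sum_congr rfl fun j _ => (_root_.map_smul _ _ _).symm
      _ = ((k : ℂ) * w ^ (k - 1)) • (algebraMap ℂ _ (Q r)) := by
          rw [← hVr, CliffordAlgebra.ι_sq_scalar]
      _ = 0 := by rw [hQr]; simp
end
end

section
/- Let p, q ≥ 1 and let Cl^ℂ_{p+q} be the Clifford algebra of Q(z) = -(z_1² + ⋯ + z_{p+q}²) on Fin (p+q) → ℂ with embedding ι. Let t ∈ ℝ^p and s ∈ ℝ^q be unit vectors, regarded as complex vectors t̃, s̃ ∈ Fin (p+q) → ℂ supported in the first p and last q coordinates respectively. Then the function g(x,y) = e^{⟨x,t⟩} (cos⟨y,s⟩ + i sin⟨y,s⟩) • (ι(t̃) + i • ι(s̃)) is monogenic on ℝ^{p+q}: Σ_{j=1}^{p+q} ι(e_j) * (∂_{x_j} g)(a) = 0 for every a. -/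
open MeasureTheory Metric
open scoped RealInnerProductSpace

noncomputable section

lemma csmul_decomp {M : Type*} [AddCommGroup M] [Module ℂ M] (c : ℂ) (u : M) :
    c • u = c.re • u + c.im • (Complex.I • u) := by
  rw [← Complex.coe_smul, ← Complex.coe_smul, smul_smul, ← add_smul, Complex.re_add_im]

lemma inner_shift_x (p q : ℕ) (t : EuclideanSpace ℝ (Fin p))
    (a : EuclideanSpace ℝ (Fin (p + q))) (j : Fin (p + q)) (r : ℝ) :
    ⟪xpart p q (a + r • EuclideanSpace.single j 1), t⟫ =
      ⟪xpart p q a, t⟫ +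
        r * Fin.addCases (motive := fun _ => ℝ) (fun i => t i) (fun _ => 0) j := by
  simp only [xpart, PiLp.inner_apply, RCLike.inner_apply, conj_trivial,
    WithLp.equiv_symm_apply, WithLp.ofLp_toLp, PiLp.add_apply, PiLp.smul_apply,
    EuclideanSpace.single_apply, smul_eq_mul, mul_ite, mul_one, mul_zero,
    add_mul, mul_add, ite_mul, zero_mul]
  rw [Finset.sum_add_distrib]
  congr 1
  refine Fin.addCases ?_ ?_ j
  · intro i0
    rw [Fin.addCases_left]
    rw [Finset.sum_eq_single i0]
    · simp [mul_comm]
    · intro b _ hb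
      simp [Fin.castAdd_inj, hb]
    · simp
  · intro i0
    rw [Fin.addCases_right, mul_zero]
    refine Finset.sum_eq_zero fun b _ => ?_
    have : Fin.castAdd q b ≠ Fin.natAdd p i0 := by
      apply Fin.ne_of_val_ne
      simp only [Fin.coe_castAdd, Fin.coe_natAdd]
      omega
    simp [this]

lemma inner_shift_y (p q : ℕ) (s : EuclideanSpace ℝ (Fin q))
    (a : EuclideanSpace ℝ (Fin (p + q))) (j : Fin (p + q)) (r : ℝ) :
    ⟪ypart p q (a + r • EuclideanSpace.single j 1), s⟫ =
      ⟪ypart p q a, s⟫ +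
        r * Fin.addCases (motive := fun _ => ℝ) (fun _ => 0) (fun i => s i) j := by
  simp only [ypart, PiLp.inner_apply, RCLike.inner_apply, conj_trivial,
    WithLp.equiv_symm_apply, WithLp.ofLp_toLp, PiLp.add_apply, PiLp.smul_apply,
    EuclideanSpace.single_apply, smul_eq_mul, mul_ite, mul_one, mul_zero,
    add_mul, mul_add, ite_mul, zero_mul]
  rw [Finset.sum_add_distrib]
  congr 1
  refine Fin.addCases ?_ ?_ j
  · intro i0
    rw [Fin.addCases_left, mul_zero]
    refine Finset.sum_eq_zero fun b _ => ?_
    have : Fin.natAdd p b ≠ Fin.castAdd q i0 := by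
      apply Fin.ne_of_val_ne
      simp only [Fin.coe_castAdd, Fin.coe_natAdd]
      omega
    simp [this]
  · intro i0
    rw [Fin.addCases_right]
    rw [Finset.sum_eq_single i0]
    · simp [mul_comm]
    · intro b _ hb
      have hv := Fin.val_ne_of_ne hb
      have : Fin.natAdd p b ≠ Fin.natAdd p i0 := by
        apply Fin.ne_of_val_ne
        simp only [Fin.coe_natAdd]
        omega
      simp [this]
    · simp

theorem stmt14 (p q : ℕ) (hp : 1 ≤ p) (hq : 1 ≤ q)
    (Q : QuadraticForm ℂ (Fin (p + q) → ℂ))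
    (hQ : ∀ z, Q z = -∑ i, z i ^ 2)
    (t : EuclideanSpace ℝ (Fin p)) (ht : ‖t‖ = 1)
    (s : EuclideanSpace ℝ (Fin q)) (hs : ‖s‖ = 1) :
    ∀ a, DiracDerivEqC (fun z =>
      ((Real.exp ⟪xpart p q z, t⟫ : ℂ) *
          ((Real.cos ⟪ypart p q z, s⟫ : ℂ) +
            Complex.I * (Real.sin ⟪ypart p q z, s⟫ : ℂ))) •
        (CliffordAlgebra.ι Q (embXC p q t) +
          Complex.I • CliffordAlgebra.ι Q (embYC p q s))) a 0 := by
  intro a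
  set u : CliffordAlgebra Q :=
    CliffordAlgebra.ι Q (embXC p q t) + Complex.I • CliffordAlgebra.ι Q (embYC p q s) with hu
  set X : ℝ := ⟪xpart p q a, t⟫ with hX
  set Y : ℝ := ⟪ypart p q a, s⟫ with hY
  set c₀ : ℂ := (Real.exp X : ℂ) * ((Real.cos Y : ℂ) + Complex.I * (Real.sin Y : ℂ)) with hc₀
  set μ : Fin (p + q) → ℂ :=
    fun j => Fin.addCases (motive := fun _ => ℂ) (fun i => (t i : ℂ))
      (fun i => Complex.I * (s i : ℂ)) j with hμdef
  refine ⟨fun j => (μ j * c₀) • u, ?_, ?_⟩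
  · intro j ℓ
    obtain ⟨α, β, hα, hβ, hμ⟩ :
        ∃ α β : ℝ,
          Fin.addCases (motive := fun _ => ℝ) (fun i => t i) (fun _ => 0) j = α ∧
          Fin.addCases (motive := fun _ => ℝ) (fun _ => 0) (fun i => s i) j = β ∧
          μ j = (α : ℂ) + (β : ℂ) * Complex.I := by
      refine Fin.addCases ?_ ?_ j
      · intro i
        exact ⟨t i, 0, by simp, by simp, by simp [hμdef]⟩
      · intro i
        exact ⟨0, s i, by simp, by simp, by simp [hμdef, mul_comm]⟩
    have hval : ℓ ((μ j * c₀) • u) =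
        (Real.exp X * α * Real.cos Y - Real.exp X * β * Real.sin Y) * ℓ u +
        (Real.exp X * α * Real.sin Y + Real.exp X * β * Real.cos Y) * ℓ (Complex.I • u) := by
      rw [csmul_decomp, map_add, LinearMap.map_smul, LinearMap.map_smul,
        smul_eq_mul, smul_eq_mul, hμ, hc₀]
      simp only [Complex.mul_re, Complex.mul_im, Complex.add_re, Complex.add_im,
        Complex.ofReal_re, Complex.ofReal_im, Complex.I_re, Complex.I_im]
      ring
    have hDA : HasDerivAt (fun r : ℝ => X + r * α) α 0 := by
      simpa using (((hasDerivAt_id (0 : ℝ)).mul_const α).const_add X)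
    have hDB : HasDerivAt (fun r : ℝ => Y + r * β) β 0 := by
      simpa using (((hasDerivAt_id (0 : ℝ)).mul_const β).const_add Y)
    have h1 := (hDA.exp.mul hDB.cos).mul_const (ℓ u)
    have h2 := (hDA.exp.mul hDB.sin).mul_const (ℓ (Complex.I • u))
    have H := h1.add h2
    have Hkey : ∀ r : ℝ,
        ℓ (((Real.exp ⟪xpart p q (a + r • EuclideanSpace.single j 1), t⟫ : ℂ) *
            ((Real.cos ⟪ypart p q (a + r • EuclideanSpace.single j 1), s⟫ : ℂ) +
              Complex.I *
                (Real.sin ⟪ypart p q (a + r • EuclideanSpace.single j 1), s⟫ : ℂ))) • u) =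
          Real.exp (X + r * α) * Real.cos (Y + r * β) * ℓ u +
          Real.exp (X + r * α) * Real.sin (Y + r * β) * ℓ (Complex.I • u) := by
      intro r
      rw [inner_shift_x p q t a j r, inner_shift_y p q s a j r, hα, hβ, ← hX, ← hY]
      rw [csmul_decomp, map_add, LinearMap.map_smul, LinearMap.map_smul,
        smul_eq_mul, smul_eq_mul]
      simp only [Complex.mul_re, Complex.mul_im, Complex.add_re, Complex.add_im,
        Complex.ofReal_re, Complex.ofReal_im, Complex.I_re, Complex.I_im]
      ring
    rw [hval]
    refine (H.congr_of_eventuallyEq (Filter.Eventually.of_forall fun r => ?_)).congr_deriv ?_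
    · exact Hkey r
    · simp only [zero_mul, add_zero, mul_zero]
      ring
  · have hterm : ∀ j, CliffordAlgebra.ι Q (Pi.single j (1 : ℂ)) * ((μ j * c₀) • u) =
        c₀ • (CliffordAlgebra.ι Q (Pi.single j (μ j)) * u) := by
      intro j
      have hps : μ j • (Pi.single j (1 : ℂ) : Fin (p + q) → ℂ) = Pi.single j (μ j) := by
        funext k
        rcases eq_or_ne k j with rfl | hk
        · simp
        · simp [Pi.single_apply, hk]
      rw [mul_smul_comm, mul_comm (μ j) c₀, mul_smul, ← smul_mul_assoc,
        ← LinearMap.map_smul, hps]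
    simp only [hterm]
    rw [← Finset.smul_sum, ← Finset.sum_mul, ← map_sum]
    have hsum : (∑ j, (Pi.single j (μ j) : Fin (p + q) → ℂ)) =
        embXC p q t + Complex.I • embYC p q s := by
      funext k
      rw [Finset.sum_apply]
      have : ∑ c : Fin (p + q), Pi.single c (μ c) k = μ k := by
        simp [Pi.single_apply]
      rw [this]
      refine Fin.addCases (motive := fun k => μ k = (embXC p q t + Complex.I • embYC p q s) k)
        ?_ ?_ k
      · intro i; simp [hμdef, embXC, embYC]
      · intro i; simp [hμdef, embXC, embYC]
    have hu2 : u = CliffordAlgebra.ι Q (embXC p q t + Complex.I • embYC p q s) := by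
      rw [hu, map_add, LinearMap.map_smul]
    rw [hsum, hu2, CliffordAlgebra.ι_sq_scalar, hQ]
    have ht2 : ∑ i, t i ^ 2 = 1 := by
      rw [EuclideanSpace.norm_eq] at ht
      have := Real.sqrt_eq_one.mp ht
      simpa [sq_abs] using this
    have hs2 : ∑ i, s i ^ 2 = 1 := by
      rw [EuclideanSpace.norm_eq] at hs
      have := Real.sqrt_eq_one.mp hs
      simpa [sq_abs] using this
    have hA : ∑ i : Fin p, ((t i : ℂ)) ^ 2 = 1 := by
      rw [← Complex.ofReal_one, ← ht2]
      push_cast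
      ring
    have hB : ∑ i : Fin q, ((s i : ℂ)) ^ 2 = 1 := by
      rw [← Complex.ofReal_one, ← hs2]
      push_cast
      ring
    have hzero : ∑ i, ((embXC p q t + Complex.I • embYC p q s) i) ^ 2 = 0 := by
      rw [Fin.sum_univ_add (f := fun i => ((embXC p q t + Complex.I • embYC p q s) i) ^ 2)]
      have e1 : ∀ i : Fin p,
          ((embXC p q t + Complex.I • embYC p q s) (Fin.castAdd q i)) ^ 2 = ((t i : ℂ)) ^ 2 := by
        intro i; simp [embXC, embYC]
      have e2 : ∀ i : Fin q,
          ((embXC p q t + Complex.I • embYC p q s) (Fin.natAdd p i)) ^ 2 =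
            -(((s i : ℂ)) ^ 2) := by
        intro i
        simp only [Pi.add_apply, Pi.smul_apply, embXC, embYC, Fin.addCases_right,
          Fin.addCases_left, smul_eq_mul, zero_add, mul_zero, add_zero]
        rw [mul_pow, Complex.I_sq]
        ring
      simp only [e1, e2]
      rw [Finset.sum_neg_distrib, hA, hB]
      ring
    rw [hzero, neg_zero, map_zero, smul_zero]
end
end

section
/- Let p ≥ 2 and x ∈ EuclideanSpace ℝ (Fin p). Then ∫_{S^{p-1}} e^{⟨x,t⟩} dσ(t) = 2π^{p/2} · Σ_{k=0}^∞ ‖x‖^{2k} / (4^k · k! · Γ(p/2 + k)). -/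
open MeasureTheory Metric Set Real
open scoped RealInnerProductSpace ENNReal NNReal

noncomputable section

lemma aux_Ioi (m : ℕ) :
    ∫ y in Ioi (0:ℝ), y ^ m * Real.exp (-y^2) = Real.Gamma ((m+1)/2) / 2 := by
  have hq : (-1:ℝ) < m := lt_of_lt_of_le (by norm_num) (Nat.cast_nonneg m)
  have h := integral_rpow_mul_exp_neg_rpow (p := 2) (q := m) (by norm_num) hq
  have h2 : ∀ y ∈ Ioi (0:ℝ), y ^ (m:ℝ) * Real.exp (-y ^ (2:ℝ)) = y ^ m * Real.exp (-y^2) := by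
    intro y hy
    rw [Real.rpow_natCast, show ((2:ℝ)) = ((2:ℕ):ℝ) by norm_num, Real.rpow_natCast]
  rw [setIntegral_congr_fun measurableSet_Ioi h2] at h
  rw [h]; ring

lemma integrable_pow_exp (m : ℕ) : Integrable (fun y : ℝ => y ^ m * Real.exp (-y^2)) := by
  have hq : (-1:ℝ) < m := lt_of_lt_of_le (by norm_num) (Nat.cast_nonneg m)
  have := integrable_rpow_mul_exp_neg_mul_sq (b := 1) one_pos hq
  simpa [Real.rpow_natCast] using this

lemma aux_even (k : ℕ) :
    ∫ y : ℝ, y ^ (2*k) * Real.exp (-y^2) = Real.Gamma (k + 1/2) := by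
  have hi := integrable_pow_exp (2*k)
  rw [← intervalIntegral.integral_Iic_add_Ioi hi.integrableOn hi.integrableOn]
  have h1 : (∫ y in Iic (0:ℝ), y ^ (2*k) * Real.exp (-y^2))
      = ∫ y in Ioi (0:ℝ), y ^ (2*k) * Real.exp (-y^2) := by
    rw [← neg_zero, ← integral_comp_neg_Ioi]
    have h : ∀ y : ℝ, (-y) ^ (2*k) * Real.exp (-(-y)^2) = y ^ (2*k) * Real.exp (-y^2) := by
      intro y; rw [neg_sq, pow_mul, neg_sq, ← pow_mul]
    simp_rw [h]
    norm_num
  rw [h1, aux_Ioi]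
  have : ((2*k:ℕ):ℝ) = 2*k := by push_cast; ring
  rw [this, show ((2:ℝ)*k+1)/2 = k + 1/2 by ring]
  ring

lemma aux_odd (k : ℕ) :
    ∫ y : ℝ, y ^ (2*k+1) * Real.exp (-y^2) = 0 := by
  have hi := integrable_pow_exp (2*k+1)
  rw [← intervalIntegral.integral_Iic_add_Ioi hi.integrableOn hi.integrableOn]
  have h1 : (∫ y in Iic (0:ℝ), y ^ (2*k+1) * Real.exp (-y^2))
      = -∫ y in Ioi (0:ℝ), y ^ (2*k+1) * Real.exp (-y^2) := by
    rw [← neg_zero, ← integral_comp_neg_Ioi]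
    have h : ∀ y : ℝ, (-y) ^ (2*k+1) * Real.exp (-(-y)^2) = -(y ^ (2*k+1) * Real.exp (-y^2)) := by
      intro y
      rw [neg_sq, pow_succ, pow_succ, pow_mul, neg_sq, ← pow_mul]
      ring
    simp_rw [h, integral_neg]
    norm_num
  rw [h1]; ring

lemma gamma_half (k : ℕ) :
    Real.Gamma (k + 1/2) = (2*k).factorial * Real.sqrt π / (4^k * k.factorial) := by
  induction k with
  | zero =>
    rw [show ((0:ℕ):ℝ) + 1/2 = 1/2 by norm_num, Real.Gamma_one_half_eq]; simp
  | succ n ih =>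
    have h : ((n+1:ℕ):ℝ) + 1/2 = (n + 1/2) + 1 := by push_cast; ring
    rw [h, Real.Gamma_add_one (by positivity), ih]
    have h2 : (2*(n+1)).factorial = (2*n+2) * ((2*n+1) * (2*n).factorial) := by
      rw [show 2*(n+1) = (2*n+1)+1 by ring, Nat.factorial_succ, Nat.factorial_succ]
    rw [h2]
    push_cast [Nat.factorial_succ]
    field_simp
    ring

lemma polar_integral (p : ℕ) (hp : 1 ≤ p) (f : EuclideanSpace ℝ (Fin p) → ℝ) :
    ∫ y, f y = ∫ z : sphere (0 : EuclideanSpace ℝ (Fin p)) 1 × Ioi (0:ℝ),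
      f ((z.2 : ℝ) • (z.1 : EuclideanSpace ℝ (Fin p)))
      ∂((volume : Measure (EuclideanSpace ℝ (Fin p))).toSphere.prod
          (Measure.volumeIoiPow (p-1))) := by
  have hdim : Module.finrank ℝ (EuclideanSpace ℝ (Fin p)) = p := finrank_euclideanSpace_fin
  haveI : Nontrivial (EuclideanSpace ℝ (Fin p)) := by
    have h0 : 0 < Module.finrank ℝ (EuclideanSpace ℝ (Fin p)) := by rw [hdim]; omega
    exact Module.nontrivial_of_finrank_pos h0
  have e1 : ∫ y, f y ∂(volume : Measure (EuclideanSpace ℝ (Fin p)))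
      = ∫ x : ({(0:EuclideanSpace ℝ (Fin p))}ᶜ : Set _), f x.1 ∂(volume.comap Subtype.val) := by
    rw [integral_subtype_comap (measurableSet_singleton _).compl, restrict_compl_singleton]
  have e2 := (volume : Measure (EuclideanSpace ℝ (Fin p))).measurePreserving_homeomorphUnitSphereProd.integral_comp
    (Homeomorph.measurableEmbedding _)
    (fun z : sphere (0 : EuclideanSpace ℝ (Fin p)) 1 × Ioi (0:ℝ) =>
      f ((z.2 : ℝ) • (z.1 : EuclideanSpace ℝ (Fin p))))
  simp only [hdim] at e2
  rw [e1, ← e2]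
  refine integral_congr_ae (Filter.Eventually.of_forall fun x => ?_)
  simp only [homeomorphUnitSphereProd_apply_fst_coe, homeomorphUnitSphereProd_apply_snd_coe]
  congr 1
  exact (smul_inv_smul₀ (norm_ne_zero_iff.2 x.2) (x.1 : EuclideanSpace ℝ (Fin p))).symm

lemma volumeIoiPow_integral (n : ℕ) (g : ℝ → ℝ) :
    ∫ r : Ioi (0:ℝ), g r ∂(Measure.volumeIoiPow n) = ∫ y in Ioi (0:ℝ), y ^ n * g y := by
  simp only [Measure.volumeIoiPow, ENNReal.ofReal]
  rw [integral_withDensity_eq_integral_smul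
    ((measurable_subtype_coe.pow_const _).real_toNNReal),
    integral_subtype_comap measurableSet_Ioi (fun a => Real.toNNReal (a ^ n) • g a),
    setIntegral_congr_fun measurableSet_Ioi (fun y hy => ?_)]
  rw [NNReal.smul_def, Real.coe_toNNReal _ (pow_nonneg (le_of_lt hy) _), smul_eq_mul]

lemma gauss_sqrt_pi : ∫ y : ℝ, Real.exp (-y^2) = Real.sqrt π := by
  simpa using integral_gaussian 1

lemma pi_moment (n k : ℕ) :
    ∫ z : EuclideanSpace ℝ (Fin (n+1)), (z 0)^k * Real.exp (-‖z‖^2)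
      = (∫ y : ℝ, y^k * Real.exp (-y^2)) * Real.sqrt π ^ n := by
  classical
  set g : Fin (n+1) → ℝ → ℝ :=
    fun i y => if i = 0 then y^k * Real.exp (-y^2) else Real.exp (-y^2) with hg
  have hexp : ∀ w : Fin (n+1) → ℝ,
      Real.exp (-∑ i, (w i)^2) = ∏ i, Real.exp (-(w i)^2) := by
    intro w
    rw [← Real.exp_sum]
    congr 1
    simp
  have key : ∀ w : Fin (n+1) → ℝ, (w 0)^k * Real.exp (-∑ i, (w i)^2) = ∏ i, g i (w i) := by
    intro w
    rw [hexp, Fin.prod_univ_succ, Fin.prod_univ_succ]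
    simp only [hg, if_pos rfl, Fin.succ_ne_zero, if_neg, ite_false]
    ring
  have hmp := MeasurePreserving.symm _ (EuclideanSpace.volume_preserving_symm_measurableEquiv_toLp (Fin (n+1)))
  have h := hmp.integral_comp
    (MeasurableEquiv.measurableEmbedding _)
    (fun z : EuclideanSpace ℝ (Fin (n+1)) => (z 0)^k * Real.exp (-‖z‖^2))
  rw [← h]
  have hpt : ∀ w : Fin (n+1) → ℝ,
      ((MeasurableEquiv.toLp 2 (Fin (n+1) → ℝ)).symm.symm w 0)^k
        * Real.exp (-‖(MeasurableEquiv.toLp 2 (Fin (n+1) → ℝ)).symm.symm w‖^2)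
      = ∏ i, g i (w i) := by
    intro w
    rw [← key]
    have h0 : (MeasurableEquiv.toLp 2 (Fin (n+1) → ℝ)).symm.symm w 0 = w 0 := rfl
    have hnorm : ‖(MeasurableEquiv.toLp 2 (Fin (n+1) → ℝ)).symm.symm w‖^2 = ∑ i, (w i)^2 := by
      rw [EuclideanSpace.norm_eq, Real.sq_sqrt (by positivity)]
      congr 1
      ext i
      rw [Real.norm_eq_abs, sq_abs]
      rfl
    rw [h0, hnorm]
  simp_rw [hpt]
  rw [MeasureTheory.volume_pi, MeasureTheory.integral_fintype_prod_eq_prod (f := g)]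
  rw [Fin.prod_univ_succ]
  simp only [hg, if_pos rfl, Fin.succ_ne_zero, if_neg, ite_false]
  rw [Finset.prod_const]
  simp [gauss_sqrt_pi]

lemma space_moment (n : ℕ) (x : EuclideanSpace ℝ (Fin (n+1))) (k : ℕ) :
    ∫ y : EuclideanSpace ℝ (Fin (n+1)), ⟪x, y⟫^k * Real.exp (-‖y‖^2)
      = ‖x‖^k * ((∫ y : ℝ, y^k * Real.exp (-y^2)) * Real.sqrt π ^ n) := by
  rcases eq_or_ne x 0 with rfl | hx
  · rcases Nat.eq_zero_or_pos k with rfl | hk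
    · have := pi_moment n 0
      simpa using this
    · simp [inner_zero_left, zero_pow hk.ne', norm_zero]
  · have hxn : ‖(‖x‖⁻¹ • x)‖ = 1 := by
      rw [norm_smul, norm_inv, norm_norm, inv_mul_cancel₀ (norm_ne_zero_iff.2 hx)]
    have hortho : Orthonormal ℝ (({0} : Set (Fin (n+1))).restrict
        (fun _ : Fin (n+1) => ‖x‖⁻¹ • x)) := by
      refine ⟨fun i => hxn, fun i j hij => absurd (Subsingleton.elim i j) hij⟩
    obtain ⟨b, hb⟩ := hortho.exists_orthonormalBasis_extension_of_card_eq
      (by simp [finrank_euclideanSpace_fin])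
    have hb0 : b 0 = ‖x‖⁻¹ • x := hb 0 rfl
    have hx0 : x = ‖x‖ • b 0 := by
      rw [hb0, smul_smul, mul_inv_cancel₀ (norm_ne_zero_iff.2 hx), one_smul]
    have hmp := b.measurePreserving_repr_symm
    have h := hmp.integral_comp (b.repr.symm.toHomeomorph.measurableEmbedding)
      (fun y : EuclideanSpace ℝ (Fin (n+1)) => ⟪x, y⟫^k * Real.exp (-‖y‖^2))
    rw [← h]
    have hpt : ∀ w : EuclideanSpace ℝ (Fin (n+1)),
        ⟪x, b.repr.symm w⟫^k * Real.exp (-‖b.repr.symm w‖^2)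
          = ‖x‖^k * ((w 0)^k * Real.exp (-‖w‖^2)) := by
      intro w
      have h1 : ⟪x, b.repr.symm w⟫ = ‖x‖ * w 0 := by
        calc ⟪x, b.repr.symm w⟫ = ‖x‖ * ⟪b 0, b.repr.symm w⟫ := by
              rw [hx0]; rw [real_inner_smul_left]; rw [← hx0]
          _ = ‖x‖ * ⟪(EuclideanSpace.single 0 (1:ℝ) : EuclideanSpace ℝ (Fin (n+1))), w⟫ := by
              rw [← b.repr_symm_single, LinearIsometryEquiv.inner_map_map]
          _ = ‖x‖ * w 0 := by rw [EuclideanSpace.inner_single_left]; simp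
      rw [h1, LinearIsometryEquiv.norm_map, mul_pow]
      ring
    simp_rw [hpt]
    rw [integral_const_mul, pi_moment]

lemma sphere_moment (n : ℕ) (x : EuclideanSpace ℝ (Fin (n+1))) (k : ℕ) :
    ∫ t : sphere (0 : EuclideanSpace ℝ (Fin (n+1))) 1,
        ⟪x, (t : EuclideanSpace ℝ (Fin (n+1)))⟫^k
        ∂(volume : Measure (EuclideanSpace ℝ (Fin (n+1)))).toSphere
      = ‖x‖^k * (2 * (∫ y : ℝ, y^k * Real.exp (-y^2)) * Real.sqrt π ^ n
          / Real.Gamma ((n+k+1)/2)) := by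
  have hpol := polar_integral (n+1) (by omega)
    (fun y : EuclideanSpace ℝ (Fin (n+1)) => ⟪x, y⟫^k * Real.exp (-‖y‖^2))
  simp only [Nat.add_sub_cancel] at hpol
  have hpt : ∀ z : sphere (0 : EuclideanSpace ℝ (Fin (n+1))) 1 × Ioi (0:ℝ),
      ⟪x, (z.2 : ℝ) • (z.1 : EuclideanSpace ℝ (Fin (n+1)))⟫^k
        * Real.exp (-‖(z.2 : ℝ) • (z.1 : EuclideanSpace ℝ (Fin (n+1)))‖^2)
      = (fun t : sphere (0 : EuclideanSpace ℝ (Fin (n+1))) 1 =>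
          ⟪x, (t : EuclideanSpace ℝ (Fin (n+1)))⟫^k) z.1
        * (fun r : Ioi (0:ℝ) => (r:ℝ)^k * Real.exp (-(r:ℝ)^2)) z.2 := by
    rintro ⟨t, r⟩
    have ht : ‖(t : EuclideanSpace ℝ (Fin (n+1)))‖ = 1 :=
      mem_sphere_zero_iff_norm.1 t.2
    have hr : (0:ℝ) < r := r.2
    simp only [real_inner_smul_right, norm_smul, Real.norm_eq_abs, abs_of_pos hr, ht,
      mul_one, mul_pow]
    ring
  simp_rw [hpt] at hpol
  rw [MeasureTheory.integral_prod_mul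
      (fun t : sphere (0 : EuclideanSpace ℝ (Fin (n+1))) 1 =>
        ⟪x, (t : EuclideanSpace ℝ (Fin (n+1)))⟫^k)
      (fun r : Ioi (0:ℝ) => (r:ℝ)^k * Real.exp (-(r:ℝ)^2)),
    volumeIoiPow_integral n (fun y => y^k * Real.exp (-y^2))] at hpol
  have hint : ∫ y in Ioi (0:ℝ), y ^ n * (y^k * Real.exp (-y^2))
      = Real.Gamma ((n+k+1)/2) / 2 := by
    have := aux_Ioi (n+k)
    rw [show ((n+k:ℕ):ℝ) + 1 = (n:ℝ)+k+1 by push_cast; ring] at this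
    rw [← this]
    refine setIntegral_congr_fun measurableSet_Ioi (fun y hy => ?_)
    rw [← mul_assoc, ← pow_add]
  rw [hint, space_moment] at hpol
  have hgpos : 0 < Real.Gamma ((n+k+1)/2) :=
    Real.Gamma_pos_of_pos (by positivity)
  field_simp at hpol ⊢
  linarith [hpol]

lemma Gamma_factorial_le {s : ℝ} (hs : 1 ≤ s) (m : ℕ) :
    Real.Gamma s * m.factorial ≤ Real.Gamma (s + m) := by
  induction m with
  | zero => simp
  | succ m ih =>
    have hsm : (0:ℝ) < s + m := by positivity
    have h1 : Real.Gamma (s + (m+1:ℕ)) = (s + m) * Real.Gamma (s + m) := by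
      rw [show s + ((m+1:ℕ):ℝ) = (s + m) + 1 by push_cast; ring,
        Real.Gamma_add_one hsm.ne']
    rw [h1]
    have h2 : Real.Gamma s * ((m+1:ℕ).factorial : ℝ) = (m+1) * (Real.Gamma s * m.factorial) := by
      push_cast [Nat.factorial_succ]; ring
    rw [h2]
    have h3 : (m+1:ℝ) ≤ s + m := by linarith
    have h4 : (0:ℝ) ≤ Real.Gamma s * m.factorial :=
      mul_nonneg (Real.Gamma_nonneg_of_nonneg (by linarith)) (Nat.cast_nonneg _)
    exact mul_le_mul h3 ih h4 (by linarith)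

lemma target_summable (c : ℝ) (hc : 1 ≤ c) (r : ℝ) :
    Summable (fun m : ℕ => r ^ (2*m) / (4^m * m.factorial * Real.Gamma (c + m))) := by
  have hg : 0 < Real.Gamma c := Real.Gamma_pos_of_pos (by linarith)
  have hf1 : ∀ m : ℕ, (1:ℝ) ≤ m.factorial := fun m => by
    exact_mod_cast Nat.one_le_iff_ne_zero.2 m.factorial_ne_zero
  have hfpos : ∀ m : ℕ, (0:ℝ) < m.factorial := fun m => by
    exact_mod_cast m.factorial_pos
  simp_rw [pow_mul]
  refine Summable.of_nonneg_of_le (fun m => ?_) (fun m => ?_)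
    (((Real.summable_pow_div_factorial (r^2/4)).mul_left (1/Real.Gamma c)))
  · have : 0 < Real.Gamma (c + m) := Real.Gamma_pos_of_pos (by positivity)
    positivity
  · have hgm : 0 < Real.Gamma (c + m) := Real.Gamma_pos_of_pos (by positivity)
    have hle : Real.Gamma c * m.factorial ≤ Real.Gamma (c + m) := Gamma_factorial_le hc m
    have hkey : 4^m * (m.factorial:ℝ) * Real.Gamma c ≤ 4^m * m.factorial * Real.Gamma (c + m) := by
      have h5 : Real.Gamma c ≤ Real.Gamma (c+m) := by
        calc Real.Gamma c = Real.Gamma c * 1 := by ring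
          _ ≤ Real.Gamma c * m.factorial := by
              exact mul_le_mul_of_nonneg_left (hf1 m) hg.le
          _ ≤ Real.Gamma (c+m) := hle
      have : (0:ℝ) < 4^m * (m.factorial:ℝ) := by positivity
      nlinarith
    have h1 : (r^2) ^ m / (4^m * m.factorial * Real.Gamma (c + m))
        ≤ (r^2) ^ m / (4^m * m.factorial * Real.Gamma c) :=
      div_le_div_of_nonneg_left (by positivity) (by positivity) hkey
    refine h1.trans (le_of_eq ?_)
    rw [div_pow, one_div]
    field_simp

theorem stmt17 (p : ℕ) (hp : 2 ≤ p) (x : EuclideanSpace ℝ (Fin p)) :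
    (∫ t : sphere (0 : EuclideanSpace ℝ (Fin p)) 1,
        Real.exp ⟪x, (t : EuclideanSpace ℝ (Fin p))⟫
        ∂(volume : Measure (EuclideanSpace ℝ (Fin p))).toSphere)
      = 2 * Real.pi ^ ((p : ℝ) / 2) *
          ∑' k : ℕ, ‖x‖ ^ (2 * k) / (4 ^ k * k.factorial * Real.Gamma ((p : ℝ) / 2 + k)) := by
  obtain ⟨n, rfl⟩ : ∃ n, p = n + 1 := ⟨p - 1, by omega⟩
  set σ := (volume : Measure (EuclideanSpace ℝ (Fin (n+1)))).toSphere with hσ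
  set g : ℕ → ℝ := fun k =>
    ‖x‖^k * (2 * (∫ y : ℝ, y^k * Real.exp (-y^2)) * Real.sqrt π ^ n
      / Real.Gamma ((n+k+1)/2)) / k.factorial with hg
  have step1 : (∫ t : sphere (0 : EuclideanSpace ℝ (Fin (n+1))) 1,
      Real.exp ⟪x, (t : EuclideanSpace ℝ (Fin (n+1)))⟫ ∂σ) = ∑' k : ℕ, g k := by
    have hexp : ∀ t : sphere (0 : EuclideanSpace ℝ (Fin (n+1))) 1,
        Real.exp ⟪x, (t : EuclideanSpace ℝ (Fin (n+1)))⟫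
          = ∑' k : ℕ, ⟪x, (t : EuclideanSpace ℝ (Fin (n+1)))⟫^k / k.factorial := by
      intro t
      rw [Real.exp_eq_exp_ℝ, NormedSpace.exp_eq_tsum_div]
    simp_rw [hexp]
    have hcont : ∀ k : ℕ, Continuous (fun t : sphere (0 : EuclideanSpace ℝ (Fin (n+1))) 1 =>
        ⟪x, (t : EuclideanSpace ℝ (Fin (n+1)))⟫^k / k.factorial) := by
      intro k
      exact ((Continuous.inner continuous_const continuous_subtype_val).pow k).div_const _
    have hmeas : ∀ k : ℕ, AEStronglyMeasurable (fun t : sphere (0 : EuclideanSpace ℝ (Fin (n+1))) 1 =>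
        ⟪x, (t : EuclideanSpace ℝ (Fin (n+1)))⟫^k / k.factorial) σ :=
      fun k => (hcont k).aestronglyMeasurable
    have hbound : ∑' k : ℕ, ∫⁻ t, ‖⟪x, (t : EuclideanSpace ℝ (Fin (n+1)))⟫^k / k.factorial‖₊ ∂σ ≠ ⊤ := by
      have hb1 : ∀ k : ℕ, (∫⁻ t, ‖⟪x, (t : EuclideanSpace ℝ (Fin (n+1)))⟫^k / k.factorial‖₊ ∂σ)
          ≤ ENNReal.ofReal (‖x‖^k / k.factorial) * σ univ := by
        intro k
        have hpt : ∀ t : sphere (0 : EuclideanSpace ℝ (Fin (n+1))) 1,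
            (‖⟪x, (t : EuclideanSpace ℝ (Fin (n+1)))⟫^k / k.factorial‖₊ : ℝ≥0∞)
              ≤ ENNReal.ofReal (‖x‖^k / k.factorial) := by
          intro t
          rw [← enorm_eq_nnnorm, Real.enorm_eq_ofReal_abs]
          apply ENNReal.ofReal_le_ofReal
          rw [abs_div, abs_pow, Nat.abs_cast]
          apply div_le_div_of_nonneg_right ?_ ?_
          · exact pow_le_pow_left₀ (abs_nonneg _) (by
              calc |⟪x, (t : EuclideanSpace ℝ (Fin (n+1)))⟫| ≤ ‖x‖ * ‖(t : EuclideanSpace ℝ (Fin (n+1)))‖ :=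
                abs_real_inner_le_norm _ _
              _ = ‖x‖ := by rw [mem_sphere_zero_iff_norm.1 t.2, mul_one]) k
          · exact_mod_cast (k.factorial_pos).le
        calc (∫⁻ t, ‖⟪x, (t : EuclideanSpace ℝ (Fin (n+1)))⟫^k / k.factorial‖₊ ∂σ)
            ≤ ∫⁻ _, ENNReal.ofReal (‖x‖^k / k.factorial) ∂σ := lintegral_mono (fun t => hpt t)
          _ = ENNReal.ofReal (‖x‖^k / k.factorial) * σ univ := by rw [lintegral_const]
      refine ne_top_of_le_ne_top ?_ (ENNReal.tsum_le_tsum hb1)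
      rw [ENNReal.tsum_mul_right]
      apply ENNReal.mul_ne_top
      · rw [← ENNReal.ofReal_tsum_of_nonneg (fun k => by positivity)
          (Real.summable_pow_div_factorial ‖x‖)]
        exact ENNReal.ofReal_ne_top
      · exact (measure_lt_top σ univ).ne
    rw [integral_tsum hmeas hbound]
    congr 1
    ext k
    rw [integral_div, sphere_moment n x k, hg]
  rw [step1]
  -- even and odd terms
  have hπ : Real.sqrt π ^ (n+1) = π ^ (((n+1:ℕ):ℝ)/2) := by
    rw [Real.sqrt_eq_rpow, ← Real.rpow_natCast (π ^ ((1:ℝ)/2)) (n+1),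
      ← Real.rpow_mul Real.pi_pos.le]
    congr 1
    push_cast
    ring
  have ha_odd : ∀ m : ℕ, g (2*m+1) = 0 := by
    intro m
    rw [hg]
    simp only [aux_odd m]
    ring
  have ha_even : ∀ m : ℕ, g (2*m) = 2 * π ^ (((n+1:ℕ):ℝ)/2) *
      (‖x‖^(2*m) / (4^m * m.factorial * Real.Gamma (((n+1:ℕ):ℝ)/2 + m))) := by
    intro m
    rw [hg]
    simp only []
    rw [aux_even m, gamma_half m]
    have hΓarg : ((n:ℝ) + (2*m:ℕ) + 1)/2 = ((n+1:ℕ):ℝ)/2 + m := by push_cast; ring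
    rw [hΓarg]
    have hΓpos : 0 < Real.Gamma (((n+1:ℕ):ℝ)/2 + m) := by
      apply Real.Gamma_pos_of_pos; positivity
    have h2m : (0:ℝ) < (2*m).factorial := by exact_mod_cast (2*m).factorial_pos
    have hm : (0:ℝ) < m.factorial := by exact_mod_cast m.factorial_pos
    have h4 : (0:ℝ) < 4^m := by positivity
    rw [← hπ]
    field_simp
    ring
  have hsum_even : Summable (fun m : ℕ => g (2*m)) := by
    simp_rw [ha_even]
    apply Summable.mul_left
    refine target_summable (((n+1:ℕ):ℝ)/2) ?_ ‖x‖
    have h2 : (2:ℝ) ≤ ((n+1:ℕ):ℝ) := by exact_mod_cast hp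
    linarith
  have hsum_odd : Summable (fun m : ℕ => g (2*m+1)) := by
    simp_rw [ha_odd]
    exact summable_zero
  rw [← tsum_even_add_odd hsum_even hsum_odd]
  simp_rw [ha_odd, tsum_zero, add_zero, ha_even]
  rw [tsum_mul_left]
end
end
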